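/- Let q_0, …, q_n be positive integers. For a nonempty subset I ⊆ {0,…,n} define l_I = (Π_{i∈I} q_i)/gcd(q_i : i ∈ I), and for 0 ≤ k ≤ n define l_k = lcm{ l_I : |I| = k+1 }. Then for all i, j ≥ 0 with i + j ≤ n, l_{i+j} divides l_i · l_j. -/
import Mathlib

theorem aux_div {α : Type*} [DecidableEq α] (q : α → ℕ) (hq : ∀ i, 0 < q i)
    (I J : Finset α) (m : α) (hIJ : I ∩ J = {m}) :
    (∏ x ∈ I ∪ J, q x) / (I ∪ J).gcd q ∣
      ((∏ x ∈ I, q x) / I.gcd q) * ((∏ x ∈ J, q x) / J.gcd q) := by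
  have hmI : m ∈ I := by
    have : m ∈ I ∩ J := by rw [hIJ]; exact Finset.mem_singleton_self m
    exact (Finset.mem_inter.mp this).1
  have hmJ : m ∈ J := by
    have : m ∈ I ∩ J := by rw [hIJ]; exact Finset.mem_singleton_self m
    exact (Finset.mem_inter.mp this).2
  set gI := I.gcd q with hgI
  set gJ := J.gcd q with hgJ
  have hgIpos : 0 < gI := Nat.pos_of_ne_zero (fun h => by
    have := Finset.gcd_eq_zero_iff.mp h m hmI
    exact (hq m).ne' this)
  have hgJpos : 0 < gJ := Nat.pos_of_ne_zero (fun h => by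
    have := Finset.gcd_eq_zero_iff.mp h m hmJ
    exact (hq m).ne' this)
  have hdI : gI ∣ ∏ x ∈ I, q x := (Finset.gcd_dvd hmI).trans (Finset.dvd_prod_of_mem q hmI)
  have hdJ : gJ ∣ ∏ x ∈ J, q x := (Finset.gcd_dvd hmJ).trans (Finset.dvd_prod_of_mem q hmJ)
  set gK := (I ∪ J).gcd q with hgK
  have hgKgcd : gK = Nat.gcd gI gJ := Finset.gcd_union
  have hmK : m ∈ I ∪ J := Finset.mem_union_left _ hmI
  have hdK : gK ∣ ∏ x ∈ I ∪ J, q x :=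
    (Finset.gcd_dvd hmK).trans (Finset.dvd_prod_of_mem q hmK)
  rw [← Nat.mul_dvd_mul_iff_right (Nat.mul_pos hgIpos hgJpos)]
  have hR : (∏ x ∈ I, q x) / gI * ((∏ x ∈ J, q x) / gJ) * (gI * gJ)
      = (∏ x ∈ I, q x) * ∏ x ∈ J, q x := by
    rw [show (∏ x ∈ I, q x) / gI * ((∏ x ∈ J, q x) / gJ) * (gI * gJ)
        = ((∏ x ∈ I, q x) / gI * gI) * ((∏ x ∈ J, q x) / gJ * gJ) by ring,
      Nat.div_mul_cancel hdI, Nat.div_mul_cancel hdJ]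
  have hL : (∏ x ∈ I ∪ J, q x) / gK * (gI * gJ)
      = (∏ x ∈ I ∪ J, q x) * Nat.lcm gI gJ := by
    rw [← Nat.gcd_mul_lcm gI gJ, ← hgKgcd, ← mul_assoc, Nat.div_mul_cancel hdK]
  rw [hR, hL]
  have hprod : (∏ x ∈ I, q x) * ∏ x ∈ J, q x = (∏ x ∈ I ∪ J, q x) * q m := by
    rw [← Finset.prod_union_inter, hIJ, Finset.prod_singleton]
  rw [hprod]
  exact mul_dvd_mul_left _ (Nat.lcm_dvd (Finset.gcd_dvd hmI) (Finset.gcd_dvd hmJ))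

/-- With l_I = (∏_{i∈I} q_i)/gcd(q_i : i∈I) and l_k = lcm of the l_I over
(k+1)-subsets, the structure constants of H^*(P(Q)) are integral:
l_{i+j} ∣ l_i · l_j for i + j ≤ n. -/
theorem stmt_14 (n : ℕ) (q : Fin (n + 1) → ℕ) (hq : ∀ i, 0 < q i) :
    ∀ i j : ℕ, i + j ≤ n →
      ((Finset.univ.powersetCard (i + j + 1)).lcm
          (fun I => (∏ x ∈ I, q x) / I.gcd q)) ∣
        ((Finset.univ.powersetCard (i + 1)).lcm
            (fun I => (∏ x ∈ I, q x) / I.gcd q)) *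
          ((Finset.univ.powersetCard (j + 1)).lcm
            (fun I => (∏ x ∈ I, q x) / I.gcd q)) := by
  intro i j hij
  apply Finset.lcm_dvd
  intro K hK
  have hKcard : K.card = i + j + 1 := (Finset.mem_powersetCard.mp hK).2
  obtain ⟨I, hIK, hIcard⟩ := Finset.exists_subset_card_eq
    (show i + 1 ≤ K.card by omega)
  have hInem : I.Nonempty := Finset.card_pos.mp (by omega)
  obtain ⟨m, hmI⟩ := hInem
  set J : Finset (Fin (n + 1)) := insert m (K \ I) with hJ
  have hmKI : m ∉ K \ I := fun h => (Finset.mem_sdiff.mp h).2 hmI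
  have hJcard : J.card = j + 1 := by
    rw [hJ, Finset.card_insert_of_notMem hmKI, Finset.card_sdiff_of_subset hIK]
    omega
  have hunion : I ∪ J = K := by
    rw [hJ, Finset.union_insert, Finset.insert_eq_self.mpr (Finset.mem_union_left _ hmI),
      Finset.union_sdiff_of_subset hIK]
  have hinter : I ∩ J = {m} := by
    rw [hJ, Finset.inter_insert_of_mem hmI, Finset.inter_sdiff_self]
    rfl
  have hImem : I ∈ Finset.univ.powersetCard (i + 1) :=
    Finset.mem_powersetCard.mpr ⟨Finset.subset_univ _, hIcard⟩
  have hJmem : J ∈ Finset.univ.powersetCard (j + 1) :=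
    Finset.mem_powersetCard.mpr ⟨Finset.subset_univ _, hJcard⟩
  calc (∏ x ∈ K, q x) / K.gcd q
      ∣ ((∏ x ∈ I, q x) / I.gcd q) * ((∏ x ∈ J, q x) / J.gcd q) := by
        rw [← hunion]; exact aux_div q hq I J m hinter
    _ ∣ _ := mul_dvd_mul (Finset.dvd_lcm (f := fun I => (∏ x ∈ I, q x) / I.gcd q) hImem) (Finset.dvd_lcm (f := fun I => (∏ x ∈ I, q x) / I.gcd q) hJmem)
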